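/- Let {x_i}_{i∈[T]} be vectors in ℝ^d, let Λ₀ be a positive-definite matrix, and Λ_t = Λ₀ + ∑_{i=1}^t x_i x_iᵀ. Then ∑_{i=1}^T ‖x_i‖²_{Λ_{i-1}^{-1}} ≥ log(det(Λ_T)/det(Λ₀)). -/

import Mathlib

open Matrix Real

lemma vecMulVec_self_posSemidef {d : ℕ} (x : Fin d → ℝ) :
    (vecMulVec x x).PosSemidef := by
  rw [vecMulVec_eq (Fin 1)]
  have : replicateCol (Fin 1) x = (replicateRow (Fin 1) x)ᴴ := by
    ext i j; simp [replicateCol, replicateRow]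
  rw [this]
  exact Matrix.posSemidef_conjTranspose_mul_self _

/-- Elliptical potential: with `Λ t = Λ₀ + ∑_{i<t} x i x iᵀ` and `Λ₀` positive-definite,
`∑_{i<T} ‖x i‖²_{(Λ i)⁻¹} ≥ log (det (Λ T) / det Λ₀)`. -/
theorem stmt_7 {d : ℕ} (T : ℕ) (x : ℕ → Fin d → ℝ)
    (Λ₀ : Matrix (Fin d) (Fin d) ℝ) (hΛ₀ : Λ₀.PosDef)
    (Λ : ℕ → Matrix (Fin d) (Fin d) ℝ)
    (hΛ : ∀ t, Λ t = Λ₀ + ∑ i ∈ Finset.range t, vecMulVec (x i) (x i)) :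
    Real.log ((Λ T).det / Λ₀.det)
      ≤ ∑ i ∈ Finset.range T, x i ⬝ᵥ ((Λ i)⁻¹).mulVec (x i) := by
  have hpos : ∀ t, (Λ t).PosDef := by
    intro t
    rw [hΛ t]
    refine hΛ₀.add_posSemidef ?_
    induction (Finset.range t) using Finset.induction with
    | empty => simpa using Matrix.PosSemidef.zero
    | insert _ _ h ihs =>
      rw [Finset.sum_insert h]
      exact (vecMulVec_self_posSemidef _).add ihs
  have hdetpos : ∀ t, 0 < (Λ t).det := fun t => (hpos t).det_pos
  induction T with
  | zero =>
    have : Λ 0 = Λ₀ := by rw [hΛ 0]; simp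
    simp [this, div_self (ne_of_gt hΛ₀.det_pos)]
  | succ T ih =>
    have hstep : Λ (T + 1) = Λ T + vecMulVec (x T) (x T) := by
      rw [hΛ (T + 1), hΛ T, Finset.sum_range_succ, add_assoc]
    have hq : 0 ≤ x T ⬝ᵥ ((Λ T)⁻¹).mulVec (x T) := by
      have := ((hpos T).inv).posSemidef.dotProduct_mulVec_nonneg (x T)
      simpa using this
    have hdet : (Λ (T + 1)).det = (Λ T).det * (1 + x T ⬝ᵥ ((Λ T)⁻¹).mulVec (x T)) := by
      rw [hstep, vecMulVec_eq (Fin 1),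
        Matrix.det_add_mul _ _ (isUnit_iff_ne_zero.mpr (ne_of_gt (hdetpos T)))]
      congr 1
      erw [Matrix.det_fin_one]
      have hsymm : ∀ i j, (Λ T)⁻¹ i j = (Λ T)⁻¹ j i := fun i j => by
        have := ((hpos T).inv).isHermitian.apply i j
        simpa using this.symm
      simp only [Matrix.mul_apply, Matrix.replicateRow, Matrix.replicateCol, Matrix.mulVec, dotProduct,
        Matrix.add_apply, Matrix.one_apply_eq, of_apply, Finset.mul_sum, Finset.sum_mul]
      congr 1
      rw [Finset.sum_comm]
      exact Finset.sum_congr rfl fun i _ => Finset.sum_congr rfl fun j _ => by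
        rw [hsymm i j]; ring
    rw [Finset.sum_range_succ]
    have hdiv : (Λ (T + 1)).det / Λ₀.det
        = ((Λ T).det / Λ₀.det) * (1 + x T ⬝ᵥ ((Λ T)⁻¹).mulVec (x T)) := by
      rw [hdet]; ring
    rw [hdiv, Real.log_mul (ne_of_gt (div_pos (hdetpos T) hΛ₀.det_pos))
      (by positivity)]
    have hlog : Real.log (1 + x T ⬝ᵥ ((Λ T)⁻¹).mulVec (x T))
        ≤ x T ⬝ᵥ ((Λ T)⁻¹).mulVec (x T) := by
      have := Real.log_le_sub_one_of_pos (x := 1 + x T ⬝ᵥ ((Λ T)⁻¹).mulVec (x T)) (by positivity)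
      linarith
    linarith
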